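/- Let G be a TSI Polish group with compatible two-sided invariant metric d, and let x,y ∈ G^ω. Define, for m ≤ n, d(x,y)|_{[m,n]} = d(x(m)···x(n), y(m)···y(n)). Then the sequence (x(0)···x(n)·y(n)^{-1}···y(0)^{-1})_n converges in G if and only if lim_m sup_{n>m} d(x,y)|_{[m,n]} = 0. -/

import Mathlib

open Filter Topology

/-- The partial product `x(0) ⋯ x(n)`. -/
def partialProd {G : Type*} [Monoid G] (x : ℕ → G) (n : ℕ) : G :=
  ((List.range (n + 1)).map x).prod

/-- The segment product `x(m) ⋯ x(n)`. -/
def segProd {G : Type*} [Monoid G] (x : ℕ → G) (m n : ℕ) : G :=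
  ((List.range' m (n + 1 - m)).map x).prod

/-- For a TSI Polish group `G` with compatible two-sided invariant metric `d` and
`x, y ∈ G^ω`, the sequence `(x(0)⋯x(n)·y(n)⁻¹⋯y(0)⁻¹)_n` converges in `G` iff
`lim_m sup_{n>m} d(x(m)⋯x(n), y(m)⋯y(n)) = 0`. -/
theorem my_isGδ_preimage {X Y : Type*} [TopologicalSpace X] [TopologicalSpace Y]
    {f : X → Y} (hf : Continuous f) {s : Set Y} (hs : IsGδ s) : IsGδ (f ⁻¹' s) := by
  obtain ⟨T, hTo, hTc, rfl⟩ := hs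
  rw [Set.preimage_sInter]
  exact IsGδ.biInter hTc fun t ht => ((hTo t ht).preimage hf).isGδ

theorem my_isGδ_range_of_complete {X Y : Type*} [MetricSpace X] [CompleteSpace X] [MetricSpace Y]
    (j : X → Y) (hj : Topology.IsEmbedding j) : IsGδ (Set.range j) := by
  set T : ℕ → Set Y := fun n =>
    ⋃ (V : Set Y) (_ : IsOpen V ∧ ∀ a b : X, j a ∈ V → j b ∈ V → dist a b < 1 / (n + 1)), V with hT
  have hTo : ∀ n, IsOpen (T n) := fun n => isOpen_iUnion fun V => isOpen_iUnion fun hV => hV.1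
  have key : Set.range j = closure (Set.range j) ∩ ⋂ n, T n := by
    apply subset_antisymm
    · rintro y ⟨x, rfl⟩
      refine ⟨subset_closure ⟨x, rfl⟩, Set.mem_iInter.2 fun n => ?_⟩
      have hb : IsOpen (Metric.ball x (1 / (2 * ((n : ℝ) + 1)))) := Metric.isOpen_ball
      rw [hj.isInducing.isOpen_iff] at hb
      obtain ⟨V, hVo, hVx⟩ := hb
      have hr : (0 : ℝ) < 1 / (2 * ((n : ℝ) + 1)) := by positivity
      refine Set.mem_iUnion.2 ⟨V, Set.mem_iUnion.2 ⟨⟨hVo, ?_⟩, ?_⟩⟩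
      · intro a b ha hb
        have ha' : a ∈ Metric.ball x (1 / (2 * ((n : ℝ) + 1))) := hVx ▸ ha
        have hb' : b ∈ Metric.ball x (1 / (2 * ((n : ℝ) + 1))) := hVx ▸ hb
        rw [Metric.mem_ball] at ha' hb'
        have := dist_triangle a x b
        rw [dist_comm x b] at this
        have harith : 1 / (2 * ((n : ℝ) + 1)) + 1 / (2 * ((n : ℝ) + 1)) = 1 / ((n : ℝ) + 1) := by
          field_simp
          norm_num
        linarith
      · have : x ∈ j ⁻¹' V := hVx ▸ Metric.mem_ball_self hr
        exact this
    · rintro y ⟨hyc, hyT⟩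
      simp only [hT, Set.mem_iInter, Set.mem_iUnion] at hyT
      choose V hV hyV using hyT
      have exW : ∀ n : ℕ, ∃ x : X,
          j x ∈ (⋂ k ∈ Finset.range (n + 1), V k) ∩ Metric.ball y (1 / (n + 1)) := by
        intro n
        have hWo : IsOpen ((⋂ k ∈ Finset.range (n + 1), V k) ∩ Metric.ball y (1 / (n + 1))) :=
          (isOpen_biInter_finset fun k _ => (hV k).1).inter Metric.isOpen_ball
        have hyW : y ∈ (⋂ k ∈ Finset.range (n + 1), V k) ∩ Metric.ball y (1 / (n + 1)) :=
          ⟨Set.mem_biInter fun k _ => hyV k, Metric.mem_ball_self (by positivity)⟩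
        obtain ⟨z, hzW, x, rfl⟩ := mem_closure_iff.1 hyc _ hWo hyW
        exact ⟨x, hzW⟩
      choose u hu using exW
      have hcauchy : CauchySeq u := by
        rw [Metric.cauchySeq_iff]
        intro ε hε
        obtain ⟨N, hN⟩ := exists_nat_one_div_lt hε
        refine ⟨N, fun p hp q hq => ?_⟩
        have h1 : j (u p) ∈ V N :=
          Set.mem_iInter₂.1 (hu p).1 N (Finset.mem_range.2 (by omega))
        have h2 : j (u q) ∈ V N :=
          Set.mem_iInter₂.1 (hu q).1 N (Finset.mem_range.2 (by omega))
        exact lt_trans ((hV N).2 _ _ h1 h2) hN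
      obtain ⟨x, hx⟩ := cauchySeq_tendsto_of_complete hcauchy
      refine ⟨x, ?_⟩
      have h1 : Tendsto (fun n => j (u n)) atTop (𝓝 (j x)) := (hj.continuous.tendsto x).comp hx
      have h2 : Tendsto (fun n => j (u n)) atTop (𝓝 y) := by
        rw [Metric.tendsto_atTop]
        intro ε hε
        obtain ⟨N, hN⟩ := exists_nat_one_div_lt hε
        refine ⟨N, fun n hn => ?_⟩
        have hb := (hu n).2
        rw [Metric.mem_ball] at hb
        have hle : 1 / ((n : ℝ) + 1) ≤ 1 / ((N : ℝ) + 1) := by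
          apply one_div_le_one_div_of_le (by positivity)
          exact_mod_cast by omega
        linarith
      exact tendsto_nhds_unique h1 h2
  rw [key]
  exact isClosed_closure.isGδ.inter (IsGδ.iInter fun n => (hTo n).isGδ)

theorem my_isGδ_range_of_polish {X Y : Type*} [TopologicalSpace X] [PolishSpace X] [MetricSpace Y]
    (j : X → Y) (hj : Topology.IsEmbedding j) : IsGδ (Set.range j) := by
  letI := TopologicalSpace.upgradeIsCompletelyMetrizable X
  exact my_isGδ_range_of_complete j hj

open UniformSpace in
theorem my_completeSpace {G : Type*} [Group G] [MetricSpace G] [PolishSpace G]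
    (hleft : ∀ g h k : G, dist (g * h) (g * k) = dist h k)
    (hright : ∀ g h k : G, dist (h * g) (k * g) = dist h k) :
    CompleteSpace G := by
  have hinv : ∀ a b : G, dist a⁻¹ b⁻¹ = dist a b := by
    intro a b
    have h1 : dist (a * a⁻¹) (a * b⁻¹) = dist a⁻¹ b⁻¹ := hleft a _ _
    have h2 : dist (a * b⁻¹ * b) (1 * b) = dist (a * b⁻¹) 1 := hright b _ _
    rw [mul_inv_cancel] at h1
    rw [inv_mul_cancel_right, one_mul] at h2
    rw [← h1, dist_comm (1 : G), ← h2]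
  have hmul : UniformContinuous₂ fun a b : G => a * b := by
    rw [UniformContinuous₂, Metric.uniformContinuous_iff]
    intro ε hε
    refine ⟨ε / 2, by linarith, ?_⟩
    rintro ⟨a, b⟩ ⟨c, d⟩ h
    rw [Prod.dist_eq] at h
    obtain ⟨h1, h2⟩ := max_lt_iff.mp h
    calc dist (Function.uncurry (fun a b : G => a * b) (a, b))
          (Function.uncurry (fun a b : G => a * b) (c, d))
        = dist (a * b) (c * d) := rfl
      _ ≤ dist (a * b) (c * b) + dist (c * b) (c * d) := dist_triangle _ _ _
      _ = dist a c + dist b d := by rw [hright, hleft]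
      _ < ε := by dsimp at h1 h2; linarith
  have hinvU : UniformContinuous fun a : G => a⁻¹ := by
    rw [Metric.uniformContinuous_iff]
    exact fun ε hε => ⟨ε, hε, fun {a b} h => by rwa [hinv]⟩
  set m : Completion G → Completion G → Completion G := Completion.map₂ (· * ·) with hm
  set iv : Completion G → Completion G := Completion.map (·⁻¹) with hiv
  have hm_coe : ∀ a b : G, m ↑a ↑b = ((a * b : G) : Completion G) :=
    fun a b => Completion.map₂_coe_coe a b _ hmul
  have hiv_coe : ∀ a : G, iv ↑a = ((a⁻¹ : G) : Completion G) := fun a => Completion.map_coe hinvU a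
  have civ : Continuous iv := Completion.continuous_map
  have hdense : DenseRange ((↑) : G → Completion G) := Completion.denseRange_coe
  have hdense2 : Dense (Set.range fun p : G × G => ((↑p.1 : Completion G), (↑p.2 : Completion G))) :=
    hdense.prodMap hdense
  -- generic two-variable extension principle
  have ext2 : ∀ F K : Completion G × Completion G → Completion G, Continuous F → Continuous K →
      (∀ a b : G, F (↑a, ↑b) = K (↑a, ↑b)) → ∀ p, F p = K p := by
    intro F K hF hK h p
    have : F = K := hF.ext_on hdense2 hK (by rintro _ ⟨⟨a, b⟩, rfl⟩; exact h a b)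
    rw [this]
  have cm2 : ∀ {f g : Completion G × Completion G → Completion G}, Continuous f →
      Continuous g → Continuous fun d => m (f d) (g d) :=
    fun hf hg => Completion.continuous_map₂ hf hg
  have idA : ∀ p : Completion G × Completion G, m (iv p.1) (m p.1 p.2) = p.2 := by
    apply ext2 (fun p : Completion G × Completion G => m (iv p.1) (m p.1 p.2)) (fun p : Completion G × Completion G => p.2)
    · exact cm2 (civ.comp continuous_fst) (cm2 continuous_fst continuous_snd)
    · exact continuous_snd
    · intro a b
      show m (iv ↑a) (m ↑a ↑b) = ↑b
      rw [hm_coe, hiv_coe, hm_coe, inv_mul_cancel_left]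
  have idB : ∀ p : Completion G × Completion G, m p.1 (m (iv p.1) p.2) = p.2 := by
    apply ext2 (fun p : Completion G × Completion G => m p.1 (m (iv p.1) p.2)) (fun p : Completion G × Completion G => p.2)
    · exact cm2 continuous_fst (cm2 (civ.comp continuous_fst) continuous_snd)
    · exact continuous_snd
    · intro a b
      show m ↑a (m (iv ↑a) ↑b) = ↑b
      rw [hiv_coe, hm_coe, hm_coe, mul_inv_cancel_left]
  have idC : ∀ p : Completion G × Completion G, m (m p.1 p.2) (iv p.2) = p.1 := by
    apply ext2 (fun p : Completion G × Completion G => m (m p.1 p.2) (iv p.2)) (fun p : Completion G × Completion G => p.1)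
    · exact cm2 (cm2 continuous_fst continuous_snd) (civ.comp continuous_snd)
    · exact continuous_fst
    · intro a b
      show m (m ↑a ↑b) (iv ↑b) = ↑a
      rw [hm_coe, hiv_coe, hm_coe, mul_inv_cancel_right]
  have hSgδ : IsGδ (Set.range ((↑) : G → Completion G)) :=
    my_isGδ_range_of_polish _ Completion.coe_isometry.isEmbedding
  suffices hsurj : Function.Surjective ((↑) : G → Completion G) by
    have hui : IsUniformInducing ((↑) : G → Completion G) :=
      Completion.coe_isometry.isUniformEmbedding.isUniformInducing
    rw [completeSpace_iff_isComplete_range hui, hsurj.range_eq]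
    exact complete_univ
  intro g
  haveI : Nonempty (Completion G) := ⟨g⟩
  let e : Completion G ≃ₜ Completion G :=
    { toFun := fun z => m g z
      invFun := fun z => m (iv g) z
      left_inv := fun z => idA (g, z)
      right_inv := fun z => idB (g, z)
      continuous_toFun := Completion.continuous_map₂ continuous_const continuous_id
      continuous_invFun := Completion.continuous_map₂ continuous_const continuous_id }
  have hD2gδ : IsGδ (e.symm ⁻¹' Set.range ((↑) : G → Completion G)) := by
    obtain ⟨T, hTo, hTc, hTeq⟩ := hSgδ
    rw [hTeq, Set.preimage_sInter]
    exact IsGδ.biInter hTc fun t ht => ((hTo t ht).preimage e.symm.continuous).isGδ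
  have hD2d : Dense (e.symm ⁻¹' Set.range ((↑) : G → Completion G)) := by
    rw [Homeomorph.preimage_symm, ← Set.range_comp]
    exact (e.surjective.denseRange.comp hdense e.continuous)
  obtain ⟨z, hz1, hz2⟩ := (Dense.inter_of_Gδ hSgδ hD2gδ hdense hD2d).nonempty
  obtain ⟨h, hh⟩ := hz1
  obtain ⟨h', hh'⟩ := hz2
  have hsymm : e.symm z = m (iv g) z := rfl
  have hz' : m (iv g) z = ↑h' := by rw [← hsymm, hh']
  have hB : m g (m (iv g) z) = z := idB (g, z)
  rw [hz'] at hB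
  have hC : m (m g ↑h') (iv ↑h') = g := idC (g, ↑h')
  rw [hB, ← hh, hiv_coe, hm_coe] at hC
  exact ⟨h * h'⁻¹, hC⟩

theorem partialProd_succ {G : Type*} [Monoid G] (x : ℕ → G) (n : ℕ) :
    partialProd x (n + 1) = partialProd x n * x (n + 1) := by
  unfold partialProd
  rw [List.range_succ, List.map_append, List.prod_append]
  simp

theorem segProd_self {G : Type*} [Monoid G] (x : ℕ → G) (n : ℕ) : segProd x n n = x n := by
  unfold segProd
  have h : n + 1 - n = 1 := by omega
  rw [h, List.range'_one]
  simp

theorem segProd_succ {G : Type*} [Monoid G] (x : ℕ → G) {m n : ℕ} (h : m ≤ n) :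
    segProd x m (n + 1) = segProd x m n * x (n + 1) := by
  unfold segProd
  have h1 : n + 1 + 1 - m = (n + 1 - m) + 1 := by omega
  rw [h1, List.range'_concat, List.map_append, List.prod_append]
  have h2 : m + 1 * (n + 1 - m) = n + 1 := by omega
  rw [h2]
  simp

theorem partialProd_mul_segProd {G : Type*} [Monoid G] (x : ℕ → G) {m n : ℕ} (h : m < n) :
    partialProd x m * segProd x (m + 1) n = partialProd x n := by
  induction n with
  | zero => omega
  | succ n ih =>
    rcases Nat.lt_succ_iff_lt_or_eq.mp h with h' | rfl
    · rw [segProd_succ x (by omega : m + 1 ≤ n), ← mul_assoc, ih h', partialProd_succ]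
    · rw [segProd_self, partialProd_succ]

theorem segProd_cons {G : Type*} [Monoid G] (x : ℕ → G) {m n : ℕ} (h : m < n) :
    segProd x m n = x m * segProd x (m + 1) n := by
  induction n with
  | zero => omega
  | succ n ih =>
    rcases Nat.lt_succ_iff_lt_or_eq.mp h with h' | rfl
    · rw [segProd_succ x (by omega : m ≤ n), ih h', segProd_succ x (by omega : m + 1 ≤ n),
        mul_assoc]
    · rw [segProd_self, segProd_succ x (le_refl m), segProd_self]

theorem dist_partial_eq_seg {G : Type*} [Group G] [MetricSpace G]
    (hleft : ∀ g h k : G, dist (g * h) (g * k) = dist h k)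
    (hright : ∀ g h k : G, dist (h * g) (k * g) = dist h k)
    (x y : ℕ → G) {m n : ℕ} (h : m < n) :
    dist (partialProd x n * (partialProd y n)⁻¹) (partialProd x m * (partialProd y m)⁻¹)
      = dist (segProd x (m + 1) n) (segProd y (m + 1) n) := by
  set P := partialProd x m
  set Q := partialProd y m
  set a := segProd x (m + 1) n
  set b := segProd y (m + 1) n
  have hx : partialProd x n = P * a := (partialProd_mul_segProd x h).symm
  have hy : partialProd y n = Q * b := (partialProd_mul_segProd y h).symm
  have e1 : partialProd x n * (partialProd y n)⁻¹ = P * (a * b⁻¹ * Q⁻¹) := by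
    rw [hx, hy]; group
  have e2 : P * Q⁻¹ = partialProd x m * (partialProd y m)⁻¹ := rfl
  rw [e1, ← e2, hleft]
  have e3 : dist (a * b⁻¹ * Q⁻¹) Q⁻¹ = dist (a * b⁻¹) 1 := by
    have := hright Q⁻¹ (a * b⁻¹) 1
    rwa [one_mul] at this
  have e4 : dist (a * b⁻¹) 1 = dist a b := by
    have := hright b (a * b⁻¹) 1
    rw [inv_mul_cancel_right, one_mul] at this
    exact this.symm
  rw [e3, e4]

theorem stmt_2 (G : Type*) [Group G] [MetricSpace G] [IsTopologicalGroup G]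
    [PolishSpace G]
    (hleft : ∀ g h k : G, dist (g * h) (g * k) = dist h k)
    (hright : ∀ g h k : G, dist (h * g) (k * g) = dist h k)
    (x y : ℕ → G) :
    (∃ l : G, Tendsto (fun n => partialProd x n * (partialProd y n)⁻¹) atTop (𝓝 l)) ↔
      (∀ ε > (0 : ℝ), ∃ m₀ : ℕ, ∀ m ≥ m₀, ∀ n > m,
        dist (segProd x m n) (segProd y m n) < ε) := by
  set z : ℕ → G := fun n => partialProd x n * (partialProd y n)⁻¹ with hz
  constructor
  · rintro ⟨l, hl⟩ ε hε
    have hcs := hl.cauchySeq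
    rw [Metric.cauchySeq_iff] at hcs
    obtain ⟨N, hN⟩ := hcs ε hε
    refine ⟨N + 1, fun m hm n hn => ?_⟩
    obtain ⟨k, rfl⟩ : ∃ k, m = k + 1 := ⟨m - 1, by omega⟩
    have := dist_partial_eq_seg hleft hright x y (show k < n by omega)
    rw [← this]
    exact hN n (by omega) k (by omega)
  · intro hcond
    haveI : CompleteSpace G := my_completeSpace hleft hright
    have hcs : CauchySeq z := by
      rw [Metric.cauchySeq_iff]
      intro ε hε
      obtain ⟨m₀, hm₀⟩ := hcond (ε / 4) (by linarith)
      -- single-term bound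
      have hsingle : ∀ m ≥ m₀, dist (x m) (y m) < ε / 2 := by
        intro m hm
        set s := segProd x (m + 1) (m + 2)
        set t := segProd y (m + 1) (m + 2)
        have hA : segProd x m (m + 2) = x m * s := segProd_cons x (by omega)
        have hB : segProd y m (m + 2) = y m * t := segProd_cons y (by omega)
        have h1 : dist (segProd x m (m + 2)) (segProd y m (m + 2)) < ε / 4 :=
          hm₀ m hm (m + 2) (by omega)
        have h2 : dist s t < ε / 4 := hm₀ (m + 1) (by omega) (m + 2) (by omega)
        have e1 : dist (x m) (y m) = dist (x m * s) (y m * s) := (hright s _ _).symm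
        have e2 : dist (y m * t) (y m * s) = dist t s := hleft _ _ _
        calc dist (x m) (y m) = dist (x m * s) (y m * s) := e1
          _ ≤ dist (x m * s) (y m * t) + dist (y m * t) (y m * s) := dist_triangle _ _ _
          _ = dist (segProd x m (m + 2)) (segProd y m (m + 2)) + dist t s := by rw [hA, hB, e2]
          _ < ε / 4 + ε / 4 := by rw [dist_comm t s]; exact add_lt_add h1 h2
          _ = ε / 2 := by ring
      -- segment bound including endpoints
      have hseg : ∀ m ≥ m₀, ∀ n ≥ m, dist (segProd x m n) (segProd y m n) < ε / 2 := by
        intro m hm n hn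
        rcases eq_or_lt_of_le hn with rfl | hlt
        · rw [segProd_self, segProd_self]
          exact hsingle m hm
        · exact lt_trans (hm₀ m hm n hlt) (by linarith)
      refine ⟨m₀, fun p hp q hq => ?_⟩
      rcases lt_trichotomy p q with h | rfl | h
      · show dist (partialProd x p * (partialProd y p)⁻¹)
            (partialProd x q * (partialProd y q)⁻¹) < ε
        rw [dist_comm, dist_partial_eq_seg hleft hright x y h]
        exact lt_of_lt_of_le (hseg (p + 1) (by omega) q (by omega)) (by linarith)
      · simp [hε]
      · show dist (partialProd x p * (partialProd y p)⁻¹)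
            (partialProd x q * (partialProd y q)⁻¹) < ε
        rw [dist_partial_eq_seg hleft hright x y h]
        exact lt_of_lt_of_le (hseg (q + 1) (by omega) p (by omega)) (by linarith)
    exact cauchySeq_tendsto_of_complete hcs
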